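/- Let p and q be Laurent polynomials in ℤ[t,t⁻¹], each with all coefficients nonnegative and each satisfying the non-cancellation property. If the difference p − q is invariant under the bar involution t ↦ t⁻¹ (i.e. p(t) − q(t) = p(t⁻¹) − q(t⁻¹)), then p = q. (This is the key step in the proof of the uniqueness of weight polynomials of Verdier self-dual mixed tilting sheaves, Proposition 4.2 of the paper.) -/

import Mathlib

open LaurentPolynomial

/-- A Laurent polynomial `p ∈ ℤ[t,t⁻¹]` has the *non-cancellation property* if for every
integer `i`, the coefficients of `t^i` and `t^(-i)` in `p` are not both nonzero. -/
def NonCancellation (p : LaurentPolynomial ℤ) : Prop :=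
  ∀ i : ℤ, p.coeff i = 0 ∨ p.coeff (-i) = 0

/-- If `p, q ∈ ℤ[t,t⁻¹]` both have nonnegative coefficients and both satisfy the
non-cancellation property, and the difference `p - q` is invariant under the bar involution
`t ↦ t⁻¹`, then `p = q`.  (Key step in the uniqueness of weight polynomials of Verdier
self-dual mixed tilting sheaves, Proposition 4.2.) -/
theorem eq_of_nonCancellation_of_bar_invariant_sub
    (p q : LaurentPolynomial ℤ)
    (hp : ∀ n : ℤ, 0 ≤ p.coeff n) (hq : ∀ n : ℤ, 0 ≤ q.coeff n)
    (hpc : NonCancellation p) (hqc : NonCancellation q)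
    (hbar : invert (p - q) = p - q) :
    p = q := by
  ext i
  have h := congrArg (fun f : LaurentPolynomial ℤ => f.coeff i) hbar
  simp only [invert_apply] at h
  rw [show ((p - q).coeff (-i) : ℤ) = p.coeff (-i) - q.coeff (-i) from rfl,
      show ((p - q).coeff i : ℤ) = p.coeff i - q.coeff i from rfl] at h
  have hpi := hp i; have hpi' := hp (-i)
  have hqi := hq i; have hqi' := hq (-i)
  rcases hpc i with h1 | h1 <;> rcases hqc i with h2 | h2 <;> omega
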